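/- Let g: ℝ^{n×R} → ℝ^{n×R} be defined by g(P) = diag(α)(1_n cᵀ + γ 1_n 1_nᵀ Ã P)/(1ᵀc + nγ) + (I - diag(α)) P Δ, where Ã is row-stochastic, Δ is row-stochastic with some entrywise positive column, α ∈ (0,1)^n, c ≻ 0, γ > 0. Then g maps S_{nR}(1_n) into itself and is a contraction in ‖·‖_∞ with constant η = max_i (α_i nγ/(1ᵀc + nγ) + (1-α_i)ζ(Δ)) < 1, where ζ(Δ) = 1 - Σ_r min_s δ_{sr}; hence g has a unique fixed point in S_{nR}(1_n) and iterates converge to it exponentially. -/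

import Mathlib

/-- The closed-loop map of the competitive seeding game at the Nash equilibrium. -/
noncomputable def seedingG (n R : ℕ) (α : Fin n → ℝ) (Atil : Matrix (Fin n) (Fin n) ℝ)
    (Δ : Matrix (Fin R) (Fin R) ℝ) (c : Fin R → ℝ) (γ : ℝ)
    (P : Matrix (Fin n) (Fin R) ℝ) : Matrix (Fin n) (Fin R) ℝ :=
  Matrix.of fun i r =>
    α i * (c r + γ * ∑ k, ∑ j, Atil k j * P j r) / ((∑ s, c s) + n * γ)
    + (1 - α i) * ∑ s, P i s * Δ s r

/-- Max absolute row sum (induced ∞-norm). -/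
noncomputable def normInf {n R : ℕ} (M : Matrix (Fin n) (Fin R) ℝ) : ℝ :=
  ⨆ i, ∑ r, |M i r|

attribute [local instance] Matrix.linftyOpNormedAddCommGroup Matrix.linftyOpNormedSpace

lemma normInf_eq_norm {n R : ℕ} (M : Matrix (Fin n) (Fin R) ℝ) : normInf M = ‖M‖ := by
  rw [Matrix.linfty_opNorm_def, normInf]
  rcases isEmpty_or_nonempty (Fin n) with hn | hn
  · simp [Real.iSup_of_isEmpty]
  · have h1 : ((Finset.univ.sup fun i : Fin n => ∑ j, ‖M i j‖₊ : NNReal) : ℝ)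
        = Finset.univ.sup' Finset.univ_nonempty (fun i : Fin n => ∑ r, |M i r|) := by
      rw [← Finset.sup'_eq_sup Finset.univ_nonempty]
      rw [Finset.comp_sup'_eq_sup'_comp Finset.univ_nonempty (fun x : NNReal => (x : ℝ))
        (fun x y => rfl)]
      refine Finset.sup'_congr _ rfl fun i _ => ?_
      simp [Function.comp, NNReal.coe_sum, Real.norm_eq_abs, abs_nonneg]
    rw [h1]
    apply le_antisymm
    · exact ciSup_le fun i => Finset.le_sup' (fun i => ∑ r, |M i r|) (Finset.mem_univ i)
    · exact Finset.sup'_le _ _ fun i _ =>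
        le_ciSup (f := fun i => ∑ r, |M i r|) (Finite.bddAbove_range _) i

section aux

variable {n R : ℕ} {α : Fin n → ℝ} {Atil : Matrix (Fin n) (Fin n) ℝ}
  {Δ : Matrix (Fin R) (Fin R) ℝ} {c : Fin R → ℝ} {γ : ℝ}

lemma sum_abs_le_normInf (M : Matrix (Fin n) (Fin R) ℝ) (i : Fin n) :
    ∑ r, |M i r| ≤ normInf M :=
  le_ciSup (f := fun i => ∑ r, |M i r|) (Finite.bddAbove_range _) i

lemma normInf_nonneg' (M : Matrix (Fin n) (Fin R) ℝ) (i : Fin n) : 0 ≤ normInf M :=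
  le_trans (Finset.sum_nonneg fun r _ => abs_nonneg _) (sum_abs_le_normInf M i)

lemma seedingG_nonneg (hα : ∀ i, 0 < α i ∧ α i < 1)
    (hA0 : ∀ i j, 0 ≤ Atil i j) (hΔ0 : ∀ r s, 0 ≤ Δ r s) (hc : ∀ r, 0 < c r)
    (hγ : 0 < γ) (hS : (0:ℝ) < (∑ s, c s) + n * γ)
    (P : Matrix (Fin n) (Fin R) ℝ) (hP0 : ∀ i r, 0 ≤ P i r) (i : Fin n) (r : Fin R) :
    0 ≤ seedingG n R α Atil Δ c γ P i r := by
  have h1 := (hα i).1; have h2 := (hα i).2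
  have hT : 0 ≤ ∑ k, ∑ j, Atil k j * P j r :=
    Finset.sum_nonneg fun k _ => Finset.sum_nonneg fun j _ => mul_nonneg (hA0 k j) (hP0 j r)
  have hsum2 : 0 ≤ ∑ s, P i s * Δ s r :=
    Finset.sum_nonneg fun s _ => mul_nonneg (hP0 i s) (hΔ0 s r)
  have hcr := hc r
  have hfirst : 0 ≤ α i * (c r + γ * ∑ k, ∑ j, Atil k j * P j r) / ((∑ s, c s) + n * γ) := by
    positivity
  exact add_nonneg hfirst (mul_nonneg (by linarith) hsum2)

lemma sum_seedingG (hA1 : ∀ i, ∑ j, Atil i j = 1) (hΔ1 : ∀ r, ∑ s, Δ r s = 1)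
    (hS : (0:ℝ) < (∑ s, c s) + n * γ)
    (P : Matrix (Fin n) (Fin R) ℝ) (hP1 : ∀ i, ∑ r, P i r = 1) (i : Fin n) :
    ∑ r, seedingG n R α Atil Δ c γ P i r = 1 := by
  have hT : ∑ r, ∑ k, ∑ j, Atil k j * P j r = n := by
    rw [Finset.sum_comm]
    calc ∑ k, ∑ r, ∑ j, Atil k j * P j r
        = ∑ k, ∑ j, ∑ r, Atil k j * P j r :=
          Finset.sum_congr rfl fun k _ => Finset.sum_comm
      _ = ∑ k : Fin n, (1:ℝ) := by
          refine Finset.sum_congr rfl fun k _ => ?_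
          calc ∑ j, ∑ r, Atil k j * P j r = ∑ j, Atil k j * ∑ r, P j r := by
                exact Finset.sum_congr rfl fun j _ => (Finset.mul_sum _ _ _).symm
            _ = ∑ j, Atil k j := by simp [hP1]
            _ = 1 := hA1 k
      _ = n := by simp
  have h2 : ∑ r, ∑ s, P i s * Δ s r = 1 := by
    rw [Finset.sum_comm]
    calc ∑ s, ∑ r, P i s * Δ s r = ∑ s, P i s * ∑ r, Δ s r := by
          exact Finset.sum_congr rfl fun s _ => (Finset.mul_sum _ _ _).symm
      _ = ∑ s, P i s := by simp [hΔ1]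
      _ = 1 := hP1 i
  have hne : ((∑ s, c s) + (n:ℝ) * γ) ≠ 0 := ne_of_gt hS
  calc ∑ r, seedingG n R α Atil Δ c γ P i r
      = (∑ r, α i * (c r + γ * ∑ k, ∑ j, Atil k j * P j r)) / ((∑ s, c s) + n * γ)
        + (1 - α i) * ∑ r, ∑ s, P i s * Δ s r := by
        simp only [seedingG, Matrix.of_apply]
        rw [Finset.sum_add_distrib, ← Finset.sum_div, ← Finset.mul_sum, ← Finset.mul_sum]
    _ = (α i * ((∑ r, c r) + γ * ∑ r, ∑ k, ∑ j, Atil k j * P j r)) / ((∑ s, c s) + n * γ)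
        + (1 - α i) * 1 := by
        rw [h2, ← Finset.mul_sum, Finset.sum_add_distrib, ← Finset.mul_sum]
    _ = 1 := by
        rw [hT]
        rw [mul_div_assoc, show (∑ r, c r) + γ * (n:ℝ) = (∑ s, c s) + n * γ by ring, div_self hne]
        ring

lemma row_bound (hα : ∀ i, 0 < α i ∧ α i < 1)
    (hA0 : ∀ i j, 0 ≤ Atil i j) (hA1 : ∀ i, ∑ j, Atil i j = 1)
    (hΔ0 : ∀ r s, 0 ≤ Δ r s) (hΔ1 : ∀ r, ∑ s, Δ r s = 1)
    (hγ : 0 < γ) (hS : (0:ℝ) < (∑ s, c s) + n * γ)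
    (hζ0 : (0:ℝ) ≤ 1 - ∑ r, ⨅ s, Δ s r)
    (P Q : Matrix (Fin n) (Fin R) ℝ)
    (hP1 : ∀ i, ∑ r, P i r = 1) (hQ1 : ∀ i, ∑ r, Q i r = 1) (i : Fin n) :
    ∑ r, |seedingG n R α Atil Δ c γ P i r - seedingG n R α Atil Δ c γ Q i r| ≤
      (α i * (n * γ) / ((∑ s, c s) + n * γ)
        + (1 - α i) * (1 - ∑ r, ⨅ s, Δ s r)) * normInf (P - Q) := by
  have hαi := hα i
  have hDle : ∀ j, ∑ r, |P j r - Q j r| ≤ normInf (P - Q) := fun j => by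
    simpa [Matrix.sub_apply] using sum_abs_le_normInf (P - Q) j
  have hN0 : 0 ≤ normInf (P - Q) := normInf_nonneg' _ i
  -- difference formula
  have hdiff : ∀ r, seedingG n R α Atil Δ c γ P i r - seedingG n R α Atil Δ c γ Q i r
      = α i * (γ * ∑ k, ∑ j, Atil k j * (P j r - Q j r)) / ((∑ s, c s) + n * γ)
        + (1 - α i) * ∑ s, (P i s - Q i s) * Δ s r := by
    intro r
    have e1 : ∑ k, ∑ j, Atil k j * (P j r - Q j r)
        = (∑ k, ∑ j, Atil k j * P j r) - ∑ k, ∑ j, Atil k j * Q j r := by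
      rw [← Finset.sum_sub_distrib]
      refine Finset.sum_congr rfl fun k _ => ?_
      rw [← Finset.sum_sub_distrib]
      exact Finset.sum_congr rfl fun j _ => by ring
    have e2 : ∑ s, (P i s - Q i s) * Δ s r
        = (∑ s, P i s * Δ s r) - ∑ s, Q i s * Δ s r := by
      rw [← Finset.sum_sub_distrib]
      exact Finset.sum_congr rfl fun s _ => by ring
    simp only [seedingG, Matrix.of_apply]
    rw [e1, e2]
    field_simp
    ring
  have hbound : ∀ r, |seedingG n R α Atil Δ c γ P i r - seedingG n R α Atil Δ c γ Q i r|
      ≤ α i * γ / ((∑ s, c s) + n * γ) * |∑ k, ∑ j, Atil k j * (P j r - Q j r)|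
        + (1 - α i) * |∑ s, (P i s - Q i s) * Δ s r| := by
    intro r
    rw [hdiff r]
    refine (abs_add_le _ _).trans (le_of_eq ?_)
    rw [abs_div, abs_mul, abs_mul, abs_mul, abs_of_pos hαi.1, abs_of_pos hγ, abs_of_pos hS,
      abs_of_pos (by linarith [hαi.2] : (0:ℝ) < 1 - α i)]
    ring
  -- bound on the A-part
  have hU : ∑ r, |∑ k, ∑ j, Atil k j * (P j r - Q j r)| ≤ n * normInf (P - Q) := by
    calc ∑ r, |∑ k, ∑ j, Atil k j * (P j r - Q j r)|
        ≤ ∑ r, ∑ k, ∑ j, Atil k j * |P j r - Q j r| := by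
          refine Finset.sum_le_sum fun r _ => ?_
          refine (Finset.abs_sum_le_sum_abs _ _).trans (Finset.sum_le_sum fun k _ => ?_)
          refine (Finset.abs_sum_le_sum_abs _ _).trans (Finset.sum_le_sum fun j _ => ?_)
          rw [abs_mul, abs_of_nonneg (hA0 k j)]
      _ = ∑ k, ∑ j, Atil k j * ∑ r, |P j r - Q j r| := by
          rw [Finset.sum_comm]
          refine Finset.sum_congr rfl fun k _ => ?_
          rw [Finset.sum_comm]
          exact Finset.sum_congr rfl fun j _ => (Finset.mul_sum _ _ _).symm
      _ ≤ ∑ k, ∑ j, Atil k j * normInf (P - Q) :=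
          Finset.sum_le_sum fun k _ => Finset.sum_le_sum fun j _ =>
            mul_le_mul_of_nonneg_left (hDle j) (hA0 k j)
      _ = n * normInf (P - Q) := by
          simp [← Finset.sum_mul, hA1]
  -- bound on the Δ-part
  have hsum0 : ∑ s, (P i s - Q i s) = 0 := by
    rw [Finset.sum_sub_distrib, hP1 i, hQ1 i, sub_self]
  have hVr : ∀ r, ∑ s, (P i s - Q i s) * Δ s r
      = ∑ s, (P i s - Q i s) * (Δ s r - ⨅ t, Δ t r) := by
    intro r
    rw [eq_comm]
    calc ∑ s, (P i s - Q i s) * (Δ s r - ⨅ t, Δ t r)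
        = ∑ s, ((P i s - Q i s) * Δ s r - (P i s - Q i s) * (⨅ t, Δ t r)) :=
          Finset.sum_congr rfl fun s _ => by ring
      _ = (∑ s, (P i s - Q i s) * Δ s r) - (∑ s, (P i s - Q i s)) * (⨅ t, Δ t r) := by
          rw [Finset.sum_sub_distrib, Finset.sum_mul]
      _ = ∑ s, (P i s - Q i s) * Δ s r := by rw [hsum0, zero_mul, sub_zero]
  have hV : ∑ r, |∑ s, (P i s - Q i s) * Δ s r|
      ≤ normInf (P - Q) * (1 - ∑ r, ⨅ s, Δ s r) := by
    calc ∑ r, |∑ s, (P i s - Q i s) * Δ s r|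
        ≤ ∑ r, ∑ s, |P i s - Q i s| * (Δ s r - ⨅ t, Δ t r) := by
          refine Finset.sum_le_sum fun r _ => ?_
          rw [hVr r]
          refine (Finset.abs_sum_le_sum_abs _ _).trans (Finset.sum_le_sum fun s _ => ?_)
          rw [abs_mul, abs_of_nonneg (show (0:ℝ) ≤ Δ s r - ⨅ t, Δ t r from
            sub_nonneg.2 (ciInf_le (Finite.bddBelow_range _) s))]
      _ = ∑ s, |P i s - Q i s| * (1 - ∑ r, ⨅ t, Δ t r) := by
          rw [Finset.sum_comm]
          refine Finset.sum_congr rfl fun s _ => ?_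
          rw [← Finset.mul_sum, Finset.sum_sub_distrib, hΔ1 s]
      _ = (∑ s, |P i s - Q i s|) * (1 - ∑ r, ⨅ t, Δ t r) := by
          rw [Finset.sum_mul]
      _ ≤ normInf (P - Q) * (1 - ∑ r, ⨅ s, Δ s r) :=
          mul_le_mul_of_nonneg_right (hDle i) hζ0
  calc ∑ r, |seedingG n R α Atil Δ c γ P i r - seedingG n R α Atil Δ c γ Q i r|
      ≤ ∑ r, (α i * γ / ((∑ s, c s) + n * γ) * |∑ k, ∑ j, Atil k j * (P j r - Q j r)|
          + (1 - α i) * |∑ s, (P i s - Q i s) * Δ s r|) :=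
        Finset.sum_le_sum fun r _ => hbound r
    _ = α i * γ / ((∑ s, c s) + n * γ) * ∑ r, |∑ k, ∑ j, Atil k j * (P j r - Q j r)|
          + (1 - α i) * ∑ r, |∑ s, (P i s - Q i s) * Δ s r| := by
        rw [Finset.sum_add_distrib, ← Finset.mul_sum, ← Finset.mul_sum]
    _ ≤ α i * γ / ((∑ s, c s) + n * γ) * (n * normInf (P - Q))
          + (1 - α i) * (normInf (P - Q) * (1 - ∑ r, ⨅ s, Δ s r)) := by
        refine add_le_add (mul_le_mul_of_nonneg_left hU ?_) (mul_le_mul_of_nonneg_left hV ?_)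
        · have := hαi.1; positivity
        · linarith [hαi.2]
    _ = (α i * (n * γ) / ((∑ s, c s) + n * γ)
        + (1 - α i) * (1 - ∑ r, ⨅ s, Δ s r)) * normInf (P - Q) := by
        ring

end aux

theorem stmt_18 (n R : ℕ) (α : Fin n → ℝ) (hα : ∀ i, 0 < α i ∧ α i < 1)
    (Atil : Matrix (Fin n) (Fin n) ℝ)
    (hA0 : ∀ i j, 0 ≤ Atil i j) (hA1 : ∀ i, ∑ j, Atil i j = 1)
    (Δ : Matrix (Fin R) (Fin R) ℝ)
    (hΔ0 : ∀ r s, 0 ≤ Δ r s) (hΔ1 : ∀ r, ∑ s, Δ r s = 1)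
    (hpos : ∃ r, ∀ s, 0 < Δ s r)
    (c : Fin R → ℝ) (hc : ∀ r, 0 < c r) (γ : ℝ) (hγ : 0 < γ)
    (η : ℝ)
    (hη : η = ⨆ i, (α i * (n * γ) / ((∑ s, c s) + n * γ)
      + (1 - α i) * (1 - ∑ r, ⨅ s, Δ s r))) :
    (∀ P : Matrix (Fin n) (Fin R) ℝ, (∀ i r, 0 ≤ P i r) → (∀ i, ∑ r, P i r = 1) →
      (∀ i r, 0 ≤ seedingG n R α Atil Δ c γ P i r) ∧
      (∀ i, ∑ r, seedingG n R α Atil Δ c γ P i r = 1)) ∧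
    η < 1 ∧
    (∀ P Q : Matrix (Fin n) (Fin R) ℝ,
      (∀ i r, 0 ≤ P i r) → (∀ i, ∑ r, P i r = 1) →
      (∀ i r, 0 ≤ Q i r) → (∀ i, ∑ r, Q i r = 1) →
      normInf (seedingG n R α Atil Δ c γ P - seedingG n R α Atil Δ c γ Q) ≤
        η * normInf (P - Q)) ∧
    (∃! Pstar : Matrix (Fin n) (Fin R) ℝ,
      ((∀ i r, 0 ≤ Pstar i r) ∧ (∀ i, ∑ r, Pstar i r = 1)) ∧
      seedingG n R α Atil Δ c γ Pstar = Pstar) ∧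
    (∀ (Pstar P0 : Matrix (Fin n) (Fin R) ℝ),
      ((∀ i r, 0 ≤ Pstar i r) ∧ (∀ i, ∑ r, Pstar i r = 1)) →
      seedingG n R α Atil Δ c γ Pstar = Pstar →
      (∀ i r, 0 ≤ P0 i r) → (∀ i, ∑ r, P0 i r = 1) →
      ∀ t, normInf ((seedingG n R α Atil Δ c γ)^[t] P0 - Pstar) ≤
        η ^ t * normInf (P0 - Pstar)) := by
  obtain ⟨r₀, hr₀⟩ := hpos
  haveI : Nonempty (Fin R) := ⟨r₀⟩
  have hcsum : 0 < ∑ s, c s := Finset.sum_pos (fun r _ => hc r) ⟨r₀, Finset.mem_univ r₀⟩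
  have hnγ : (0:ℝ) ≤ (n:ℝ) * γ := by positivity
  have hS : (0:ℝ) < (∑ s, c s) + n * γ := by linarith
  have hm0 : ∀ r : Fin R, (0:ℝ) ≤ ⨅ s, Δ s r := fun r => le_ciInf fun s => hΔ0 s r
  have hmpos : (0:ℝ) < ⨅ s, Δ s r₀ := by
    obtain ⟨s₀, hs₀⟩ := Finite.exists_min fun s => Δ s r₀
    exact lt_of_lt_of_le (hr₀ s₀) (le_ciInf hs₀)
  have hζ0 : (0:ℝ) ≤ 1 - ∑ r, ⨅ s, Δ s r := by
    have h1 : ∑ r, (⨅ s, Δ s r) ≤ ∑ r, Δ r₀ r :=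
      Finset.sum_le_sum fun r _ => ciInf_le (Finite.bddBelow_range _) r₀
    rw [hΔ1 r₀] at h1; linarith
  have hζ1 : (1:ℝ) - ∑ r, ⨅ s, Δ s r < 1 := by
    have h1 : 0 < ∑ r, ⨅ s, Δ s r :=
      Finset.sum_pos' (fun r _ => hm0 r) ⟨r₀, Finset.mem_univ r₀, hmpos⟩
    linarith
  have hf0 : ∀ i, 0 ≤ α i * (n * γ) / ((∑ s, c s) + n * γ)
      + (1 - α i) * (1 - ∑ r, ⨅ s, Δ s r) := by
    intro i
    have h1 := (hα i).1; have h2 := (hα i).2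
    have ha : 0 ≤ α i * (n * γ) / ((∑ s, c s) + n * γ) := by positivity
    have hb : 0 ≤ (1 - α i) * (1 - ∑ r, ⨅ s, Δ s r) := mul_nonneg (by linarith) hζ0
    linarith
  have hf1 : ∀ i, α i * (n * γ) / ((∑ s, c s) + n * γ)
      + (1 - α i) * (1 - ∑ r, ⨅ s, Δ s r) < 1 := by
    intro i
    have h1 := (hα i).1; have h2 := (hα i).2
    have hx : α i * (n * γ) / ((∑ s, c s) + n * γ) < α i := by
      rw [mul_div_assoc]
      have hlt : ((n:ℝ) * γ) / ((∑ s, c s) + n * γ) < 1 := (div_lt_one hS).2 (by linarith)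
      have hge : (0:ℝ) ≤ ((n:ℝ) * γ) / ((∑ s, c s) + n * γ) := by positivity
      nlinarith
    have hy : (1 - α i) * (1 - ∑ r, ⨅ s, Δ s r) < 1 - α i := by nlinarith
    linarith
  have hη0 : 0 ≤ η := by
    rcases isEmpty_or_nonempty (Fin n) with hn | hn
    · rw [hη, Real.iSup_of_isEmpty]
    · obtain ⟨i⟩ := hn
      rw [hη]
      exact le_trans (hf0 i) (le_ciSup (f := fun i => α i * (n * γ) / ((∑ s, c s) + n * γ)
        + (1 - α i) * (1 - ∑ r, ⨅ s, Δ s r)) (Finite.bddAbove_range _) i)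
  have hη1 : η < 1 := by
    rcases isEmpty_or_nonempty (Fin n) with hn | hn
    · rw [hη, Real.iSup_of_isEmpty]; norm_num
    · obtain ⟨i₀, hi₀⟩ := Finite.exists_max fun i =>
        α i * (n * γ) / ((∑ s, c s) + n * γ) + (1 - α i) * (1 - ∑ r, ⨅ s, Δ s r)
      calc η ≤ α i₀ * (n * γ) / ((∑ s, c s) + n * γ)
            + (1 - α i₀) * (1 - ∑ r, ⨅ s, Δ s r) := by rw [hη]; exact ciSup_le hi₀
        _ < 1 := hf1 i₀
  have hfη : ∀ i, α i * (n * γ) / ((∑ s, c s) + n * γ)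
      + (1 - α i) * (1 - ∑ r, ⨅ s, Δ s r) ≤ η := fun i =>
    hη ▸ le_ciSup (f := fun i => α i * (n * γ) / ((∑ s, c s) + n * γ)
      + (1 - α i) * (1 - ∑ r, ⨅ s, Δ s r)) (Finite.bddAbove_range _) i
  -- invariance
  have hinv : ∀ P : Matrix (Fin n) (Fin R) ℝ, (∀ i r, 0 ≤ P i r) → (∀ i, ∑ r, P i r = 1) →
      (∀ i r, 0 ≤ seedingG n R α Atil Δ c γ P i r) ∧
      (∀ i, ∑ r, seedingG n R α Atil Δ c γ P i r = 1) := fun P hP0 hP1 =>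
    ⟨fun i r => seedingG_nonneg hα hA0 hΔ0 hc hγ hS P hP0 i r,
     fun i => sum_seedingG hA1 hΔ1 hS P hP1 i⟩
  -- contraction
  have hcontr : ∀ P Q : Matrix (Fin n) (Fin R) ℝ,
      (∀ i, ∑ r, P i r = 1) → (∀ i, ∑ r, Q i r = 1) →
      normInf (seedingG n R α Atil Δ c γ P - seedingG n R α Atil Δ c γ Q) ≤
        η * normInf (P - Q) := by
    intro P Q hP1 hQ1
    rcases isEmpty_or_nonempty (Fin n) with hn | hn
    · simp only [normInf, Real.iSup_of_isEmpty]
      simp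
    · show (⨆ i, ∑ r, |(seedingG n R α Atil Δ c γ P - seedingG n R α Atil Δ c γ Q) i r|)
        ≤ η * normInf (P - Q)
      refine ciSup_le fun i => ?_
      have h1 : ∑ r, |(seedingG n R α Atil Δ c γ P - seedingG n R α Atil Δ c γ Q) i r|
          = ∑ r, |seedingG n R α Atil Δ c γ P i r - seedingG n R α Atil Δ c γ Q i r| := by
        simp [Matrix.sub_apply]
      rw [h1]
      exact (row_bound hα hA0 hA1 hΔ0 hΔ1 hγ hS hζ0 P Q hP1 hQ1 i).trans
        (mul_le_mul_of_nonneg_right (hfη i) (normInf_nonneg' _ i))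
  refine ⟨hinv, hη1, fun P Q hP0 hP1 hQ0 hQ1 => hcontr P Q hP1 hQ1, ?_, ?_⟩
  · -- existence and uniqueness of the fixed point via Banach
    classical
    set K : Set (Matrix (Fin n) (Fin R) ℝ) :=
      {P | (∀ i r, 0 ≤ P i r) ∧ (∀ i, ∑ r, P i r = 1)} with hKdef
    have hev : ∀ (i : Fin n) (r : Fin R),
        Continuous fun P : Matrix (Fin n) (Fin R) ℝ => P i r := by
      intro i r
      exact LinearMap.continuous_of_finiteDimensional
        ({ toFun := fun P => P i r, map_add' := fun _ _ => rfl,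
           map_smul' := fun _ _ => rfl } : Matrix (Fin n) (Fin R) ℝ →ₗ[ℝ] ℝ)
    have hKclosed : IsClosed K := by
      have : K = (⋂ i, ⋂ r, {P : Matrix (Fin n) (Fin R) ℝ | 0 ≤ P i r}) ∩
          ⋂ i, {P : Matrix (Fin n) (Fin R) ℝ | ∑ r, P i r = 1} := by
        ext P
        simp [hKdef, Set.mem_iInter]
      rw [this]
      exact IsClosed.inter
        (isClosed_iInter fun i => isClosed_iInter fun r =>
          isClosed_le continuous_const (hev i r))
        (isClosed_iInter fun i =>
          isClosed_eq (continuous_finset_sum _ fun r _ => hev i r) continuous_const)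
    have hP0mem : (Matrix.of fun (i : Fin n) (r : Fin R) =>
        if r = r₀ then (1:ℝ) else 0) ∈ K := by
      constructor
      · intro i r
        simp only [Matrix.of_apply]
        split <;> norm_num
      · intro i
        simp [Matrix.of_apply]
    haveI : Nonempty ↥K := ⟨⟨_, hP0mem⟩⟩
    haveI : CompleteSpace ↥K := hKclosed.completeSpace_coe
    set gK : ↥K → ↥K := fun x =>
      ⟨seedingG n R α Atil Δ c γ x.1, (hinv x.1 x.2.1 x.2.2).1, (hinv x.1 x.2.1 x.2.2).2⟩
      with hgKdef
    have hC : ContractingWith (⟨η, hη0⟩ : NNReal) gK := by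
      constructor
      · exact_mod_cast hη1
      · refine LipschitzWith.of_dist_le_mul fun x y => ?_
        rw [Subtype.dist_eq, Subtype.dist_eq, dist_eq_norm, dist_eq_norm,
          ← normInf_eq_norm, ← normInf_eq_norm]
        exact hcontr x.1 y.1 x.2.2 y.2.2
    haveI : @CompleteSpace ↥K (PseudoEMetricSpace.toUniformSpace (self := EMetricSpace.toPseudoEMetricSpace (α := ↥K))) := by
      exact hKclosed.completeSpace_coe
    refine ⟨(ContractingWith.fixedPoint gK hC).1,
      ⟨⟨(ContractingWith.fixedPoint gK hC).2.1, (ContractingWith.fixedPoint gK hC).2.2⟩, ?_⟩, ?_⟩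
    · exact congrArg Subtype.val (hC.fixedPoint_isFixedPt)
    · rintro Q ⟨⟨hQ0, hQ1⟩, hQfix⟩
      have hfp : Function.IsFixedPt gK ⟨Q, hQ0, hQ1⟩ := Subtype.ext hQfix
      exact congrArg Subtype.val (hC.fixedPoint_unique hfp)
  · -- exponential convergence
    rintro Pstar P0 ⟨hPs0, hPs1⟩ hfix hP00 hP01 t
    have hiter : ∀ t, (∀ i r, 0 ≤ (seedingG n R α Atil Δ c γ)^[t] P0 i r) ∧
        (∀ i, ∑ r, (seedingG n R α Atil Δ c γ)^[t] P0 i r = 1) := by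
      intro t
      induction t with
      | zero => exact ⟨hP00, hP01⟩
      | succ t ih =>
        rw [Function.iterate_succ_apply']
        exact hinv _ ih.1 ih.2
    induction t with
    | zero =>
      simp [Function.iterate_zero_apply]
    | succ t ih =>
      rw [Function.iterate_succ_apply']
      calc normInf (seedingG n R α Atil Δ c γ ((seedingG n R α Atil Δ c γ)^[t] P0) - Pstar)
          = normInf (seedingG n R α Atil Δ c γ ((seedingG n R α Atil Δ c γ)^[t] P0)
            - seedingG n R α Atil Δ c γ Pstar) := by rw [hfix]
        _ ≤ η * normInf ((seedingG n R α Atil Δ c γ)^[t] P0 - Pstar) :=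
            hcontr _ _ (hiter t).2 hPs1
        _ ≤ η * (η ^ t * normInf (P0 - Pstar)) := mul_le_mul_of_nonneg_left ih hη0
        _ = η ^ (t + 1) * normInf (P0 - Pstar) := by ring
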